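/- Define Φ(z, w) = (1/2)·log₂(1 + zᴴAz/σ₁²) - (1/2)·log₂(1 + wᴴBw/σ₂²), where A, B are Hermitian positive semidefinite, σ₁, σ₂ > 0. Define the surrogate Φ̃(z, w | z⋆, w⋆) = (1/2)·log₂(1 + 2Re((z⋆)ᴴAz)/σ₁² - (z⋆)ᴴAz⋆/σ₁²) - (wᴴBw - (w⋆)ᴴBw⋆)/(2·ln2·(σ₂² + (w⋆)ᴴBw⋆)) - (1/2)·log₂(1 + (w⋆)ᴴBw⋆/σ₂²). Then for all z, w with 2Re((z⋆)ᴴAz)/σ₁² - (z⋆)ᴴAz⋆/σ₁² > -1: (i) Φ̃(z, w | z⋆, w⋆) ≤ Φ(z, w), and (ii) Φ̃(z⋆, w⋆ | z⋆, w⋆) = Φ(z⋆, w⋆). -/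

import Mathlib

open Matrix
open scoped ComplexOrder

lemma herm_re_symm {m : ℕ} (A : Matrix (Fin m) (Fin m) ℂ) (hA : A.IsHermitian)
    (x y : Fin m → ℂ) :
    (star x ⬝ᵥ A.mulVec y).re = (star y ⬝ᵥ A.mulVec x).re := by
  have h : star (star y ⬝ᵥ A.mulVec x) = star x ⬝ᵥ A.mulVec y := by
    rw [Matrix.dotProduct_mulVec, ← star_dotProduct_star, Matrix.star_vecMul,
      star_star, hA.eq]
  rw [← h, Complex.star_def, Complex.conj_re]

/-- quadratic lower bound from positive semidefiniteness -/
lemma quad_lb {m : ℕ} (A : Matrix (Fin m) (Fin m) ℂ) (hA : A.PosSemidef)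
    (zs z : Fin m → ℂ) :
    2 * (star zs ⬝ᵥ A.mulVec z).re - (star zs ⬝ᵥ A.mulVec zs).re
      ≤ (star z ⬝ᵥ A.mulVec z).re := by
  have h := hA.re_dotProduct_nonneg (z - zs)
  have hexp : star (z - zs) ⬝ᵥ A.mulVec (z - zs)
      = star z ⬝ᵥ A.mulVec z - star z ⬝ᵥ A.mulVec zs
        - star zs ⬝ᵥ A.mulVec z + star zs ⬝ᵥ A.mulVec zs := by
    simp [star_sub, sub_dotProduct, dotProduct_sub, Matrix.mulVec_sub]
    ring
  rw [hexp] at h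
  simp only [RCLike.re_to_complex, Complex.add_re, Complex.sub_re] at h
  have hsym := herm_re_symm A hA.1 z zs
  linarith

/-- concavity of log: log x ≤ log x₀ + (x - x₀)/x₀ -/
lemma log_concave_ub (x x₀ : ℝ) (hx : 0 < x) (hx₀ : 0 < x₀) :
    Real.log x ≤ Real.log x₀ + (x - x₀) / x₀ := by
  have h := Real.log_le_sub_one_of_pos (x := x / x₀) (by positivity)
  rw [Real.log_div hx.ne' hx₀.ne'] at h
  have : x / x₀ - 1 = (x - x₀) / x₀ := by field_simp
  linarith [this ▸ h]

/-- The SCO surrogate `Φ̃` is a global lower bound on `Φ` (on the region where its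
logarithm argument is positive) and is tight at the expansion point `(z⋆, w⋆)`. -/
theorem stmt_5 (m n : ℕ)
    (A : Matrix (Fin m) (Fin m) ℂ) (B : Matrix (Fin n) (Fin n) ℂ)
    (hA : A.PosSemidef) (hB : B.PosSemidef)
    (σ₁ σ₂ : ℝ) (hσ₁ : 0 < σ₁) (hσ₂ : 0 < σ₂)
    (zs : Fin m → ℂ) (ws : Fin n → ℂ)
    (Φ : (Fin m → ℂ) → (Fin n → ℂ) → ℝ)
    (hΦ : ∀ z w, Φ z w =
      (1/2) * Real.logb 2 (1 + (star z ⬝ᵥ A.mulVec z).re / σ₁ ^ 2)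
        - (1/2) * Real.logb 2 (1 + (star w ⬝ᵥ B.mulVec w).re / σ₂ ^ 2))
    (Φt : (Fin m → ℂ) → (Fin n → ℂ) → ℝ)
    (hΦt : ∀ z w, Φt z w =
      (1/2) * Real.logb 2 (1 + 2 * (star zs ⬝ᵥ A.mulVec z).re / σ₁ ^ 2
          - (star zs ⬝ᵥ A.mulVec zs).re / σ₁ ^ 2)
        - ((star w ⬝ᵥ B.mulVec w).re - (star ws ⬝ᵥ B.mulVec ws).re)
            / (2 * Real.log 2 * (σ₂ ^ 2 + (star ws ⬝ᵥ B.mulVec ws).re))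
        - (1/2) * Real.logb 2 (1 + (star ws ⬝ᵥ B.mulVec ws).re / σ₂ ^ 2)) :
    (∀ z w, -1 < 2 * (star zs ⬝ᵥ A.mulVec z).re / σ₁ ^ 2
        - (star zs ⬝ᵥ A.mulVec zs).re / σ₁ ^ 2 → Φt z w ≤ Φ z w)
      ∧ Φt zs ws = Φ zs ws := by
  have hσ₁2 : (0:ℝ) < σ₁ ^ 2 := by positivity
  have hσ₂2 : (0:ℝ) < σ₂ ^ 2 := by positivity
  have hbws : (0:ℝ) ≤ (star ws ⬝ᵥ B.mulVec ws).re := hB.re_dotProduct_nonneg ws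
  constructor
  · intro z w hz
    rw [hΦ, hΦt]
    have ha : (0:ℝ) ≤ (star z ⬝ᵥ A.mulVec z).re := hA.re_dotProduct_nonneg z
    have hbw : (0:ℝ) ≤ (star w ⬝ᵥ B.mulVec w).re := hB.re_dotProduct_nonneg w
    -- first term
    have h1 : (1/2) * Real.logb 2 (1 + 2 * (star zs ⬝ᵥ A.mulVec z).re / σ₁ ^ 2
          - (star zs ⬝ᵥ A.mulVec zs).re / σ₁ ^ 2)
        ≤ (1/2) * Real.logb 2 (1 + (star z ⬝ᵥ A.mulVec z).re / σ₁ ^ 2) := by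
      have hq := quad_lb A hA zs z
      have hle : 1 + 2 * (star zs ⬝ᵥ A.mulVec z).re / σ₁ ^ 2
          - (star zs ⬝ᵥ A.mulVec zs).re / σ₁ ^ 2
          ≤ 1 + (star z ⬝ᵥ A.mulVec z).re / σ₁ ^ 2 := by
        have h' := (div_le_div_iff_of_pos_right hσ₁2).mpr hq
        have e1 : (2 * (star zs ⬝ᵥ A.mulVec z).re - (star zs ⬝ᵥ A.mulVec zs).re) / σ₁ ^ 2
            = 2 * (star zs ⬝ᵥ A.mulVec z).re / σ₁ ^ 2
              - (star zs ⬝ᵥ A.mulVec zs).re / σ₁ ^ 2 := by ring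
        linarith
      have hpos : 0 < 1 + 2 * (star zs ⬝ᵥ A.mulVec z).re / σ₁ ^ 2
          - (star zs ⬝ᵥ A.mulVec zs).re / σ₁ ^ 2 := by linarith
      have := Real.logb_le_logb_of_le (b := 2) one_lt_two hpos hle
      linarith
    -- second term
    have h2 : - ((star w ⬝ᵥ B.mulVec w).re - (star ws ⬝ᵥ B.mulVec ws).re)
            / (2 * Real.log 2 * (σ₂ ^ 2 + (star ws ⬝ᵥ B.mulVec ws).re))
        - (1/2) * Real.logb 2 (1 + (star ws ⬝ᵥ B.mulVec ws).re / σ₂ ^ 2)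
        ≤ - (1/2) * Real.logb 2 (1 + (star w ⬝ᵥ B.mulVec w).re / σ₂ ^ 2) := by
      set b := (star w ⬝ᵥ B.mulVec w).re
      set bs := (star ws ⬝ᵥ B.mulVec ws).re
      have hx : (0:ℝ) < 1 + b / σ₂ ^ 2 := by positivity
      have hx₀ : (0:ℝ) < 1 + bs / σ₂ ^ 2 := by positivity
      have hlog := log_concave_ub (1 + b / σ₂ ^ 2) (1 + bs / σ₂ ^ 2) hx hx₀
      have hdiff : (1 + b / σ₂ ^ 2 - (1 + bs / σ₂ ^ 2)) / (1 + bs / σ₂ ^ 2)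
          = (b - bs) / (σ₂ ^ 2 + bs) := by
        rw [div_eq_div_iff (by positivity) (by positivity)]
        field_simp
        ring
      rw [hdiff] at hlog
      have hln2 : (0:ℝ) < Real.log 2 := Real.log_pos one_lt_two
      have hden : (0:ℝ) < σ₂ ^ 2 + bs := by positivity
      have key : Real.log (1 + b / σ₂ ^ 2) / (2 * Real.log 2)
          ≤ (Real.log (1 + bs / σ₂ ^ 2) + (b - bs) / (σ₂ ^ 2 + bs)) / (2 * Real.log 2) := by
        exact (div_le_div_iff_of_pos_right (by positivity)).mpr hlog
      have heq : (Real.log (1 + bs / σ₂ ^ 2) + (b - bs) / (σ₂ ^ 2 + bs)) / (2 * Real.log 2)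
          = (1/2) * (Real.log (1 + bs / σ₂ ^ 2) / Real.log 2)
            + (b - bs) / (2 * Real.log 2 * (σ₂ ^ 2 + bs)) := by
        field_simp
      have heq2 : Real.log (1 + b / σ₂ ^ 2) / (2 * Real.log 2)
          = (1/2) * (Real.log (1 + b / σ₂ ^ 2) / Real.log 2) := by ring
      rw [Real.logb, Real.logb]
      rw [heq, heq2] at key
      linarith [neg_div (2 * Real.log 2 * (σ₂ ^ 2 + bs)) (b - bs)]
    linarith [neg_div (2 * Real.log 2 * (σ₂ ^ 2 + (star ws ⬝ᵥ B.mulVec ws).re))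
      ((star w ⬝ᵥ B.mulVec w).re - (star ws ⬝ᵥ B.mulVec ws).re)]
  · rw [hΦ, hΦt]
    ring
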